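/- arXiv:1610.02592 — 5 statements merged into one kernel-verified Lean document; each statement's English description precedes it below -/
import Mathlib

section
/- Let a, b, c, d ≥ 0 be real numbers and let k > 1 be a real number. Then cosh a + cosh b = cosh c + cosh d and cosh(ka) + cosh(kb) = cosh(kc) + cosh(kd) hold simultaneously if and only if {a,b} = {c,d}, i.e. (a = c and b = d) or (a = d and b = c). -/
open Real Set intervalIntegral

private lemma hasDerivAt_sinh_mul (k x : ℝ) :
    HasDerivAt (fun t : ℝ => Real.sinh (k * t)) (k * Real.cosh (k * x)) x := by
  simpa [mul_comm, Function.comp_def] using (Real.hasDerivAt_sinh (k * x)).comp x ((hasDerivAt_id x).const_mul k)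

private lemma hasDerivAt_cosh_mul (k x : ℝ) :
    HasDerivAt (fun t : ℝ => Real.cosh (k * t)) (k * Real.sinh (k * x)) x := by
  simpa [mul_comm, Function.comp_def] using (Real.hasDerivAt_cosh (k * x)).comp x ((hasDerivAt_id x).const_mul k)

/-- The fundamental positivity: k cosh(kx) sinh x - sinh(kx) cosh x > 0 for x > 0, k > 1. -/
private lemma G_pos {k : ℝ} (hk : 1 < k) {x : ℝ} (hx : 0 < x) :
    0 < k * Real.cosh (k * x) * Real.sinh x - Real.sinh (k * x) * Real.cosh x := by
  set G : ℝ → ℝ := fun t => k * Real.cosh (k * t) * Real.sinh t - Real.sinh (k * t) * Real.cosh t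
    with hG
  have hder : ∀ t : ℝ, HasDerivAt G ((k ^ 2 - 1) * (Real.sinh (k * t) * Real.sinh t)) t := by
    intro t
    have h1 : HasDerivAt (fun s : ℝ => k * Real.cosh (k * s) * Real.sinh s)
        (k * (k * Real.sinh (k * t)) * Real.sinh t + k * Real.cosh (k * t) * Real.cosh t) t := by
      exact (((hasDerivAt_cosh_mul k t).const_mul k).mul (Real.hasDerivAt_sinh t))
    have h2 : HasDerivAt (fun s : ℝ => Real.sinh (k * s) * Real.cosh s)
        (k * Real.cosh (k * t) * Real.cosh t + Real.sinh (k * t) * Real.sinh t) t :=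
      (hasDerivAt_sinh_mul k t).mul (Real.hasDerivAt_cosh t)
    have := h1.sub h2
    exact this.congr_deriv (by ring)
  have hmono : StrictMonoOn G (Ici (0 : ℝ)) := by
    apply strictMonoOn_of_deriv_pos (convex_Ici 0)
    · exact fun t _ => (hder t).differentiableAt.continuousAt.continuousWithinAt
    · intro t ht
      rw [interior_Ici] at ht
      rw [(hder t).deriv]
      have h1 : 0 < Real.sinh t := Real.sinh_pos_iff.2 ht
      have h2 : 0 < Real.sinh (k * t) :=
        Real.sinh_pos_iff.2 (mul_pos (lt_trans one_pos hk) ht)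
      have : 0 < k ^ 2 - 1 := by nlinarith
      positivity
  have h0 : G 0 = 0 := by simp [hG]
  have := hmono (self_mem_Ici) (le_of_lt hx : (0:ℝ) ≤ x) hx
  rw [h0] at this
  exact this

/-- The ratio sinh(kx)/sinh(x) is strictly monotone on (0, ∞). -/
private lemma ratio_strictMono {k : ℝ} (hk : 1 < k) :
    StrictMonoOn (fun x => Real.sinh (k * x) / Real.sinh x) (Ioi (0 : ℝ)) := by
  apply strictMonoOn_of_deriv_pos (convex_Ioi 0)
  · apply ContinuousOn.div
    · exact (Real.continuous_sinh.comp (continuous_const.mul continuous_id)).continuousOn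
    · exact Real.continuous_sinh.continuousOn
    · intro x hx; exact (Real.sinh_pos_iff.2 hx).ne'
  · intro x hx
    rw [interior_Ioi] at hx
    have hsx : 0 < Real.sinh x := Real.sinh_pos_iff.2 hx
    have hder : HasDerivAt (fun x => Real.sinh (k * x) / Real.sinh x)
        ((k * Real.cosh (k * x) * Real.sinh x - Real.sinh (k * x) * Real.cosh x)
          / Real.sinh x ^ 2) x :=
      (hasDerivAt_sinh_mul k x).div (Real.hasDerivAt_sinh x) hsx.ne'
    rw [hder.deriv]
    exact div_pos (G_pos hk hx) (by positivity)

/-- Cross-multiplied monotonicity. -/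
private lemma cross_le {k : ℝ} (hk : 1 < k) {x y : ℝ} (hx : 0 < x) (hxy : x ≤ y) :
    Real.sinh (k * x) * Real.sinh y ≤ Real.sinh (k * y) * Real.sinh x := by
  have hy : 0 < y := lt_of_lt_of_le hx hxy
  have hsx : 0 < Real.sinh x := Real.sinh_pos_iff.2 hx
  have hsy : 0 < Real.sinh y := Real.sinh_pos_iff.2 hy
  rcases eq_or_lt_of_le hxy with rfl | hlt
  · ring_nf; rfl
  · have := ratio_strictMono hk (mem_Ioi.2 hx) (mem_Ioi.2 hy) hlt
    rw [div_lt_div_iff₀ hsx hsy] at this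
    linarith

private lemma cross_lt {k : ℝ} (hk : 1 < k) {x y : ℝ} (hx : 0 < x) (hxy : x < y) :
    Real.sinh (k * x) * Real.sinh y < Real.sinh (k * y) * Real.sinh x := by
  have hy : 0 < y := lt_trans hx hxy
  have hsx : 0 < Real.sinh x := Real.sinh_pos_iff.2 hx
  have hsy : 0 < Real.sinh y := Real.sinh_pos_iff.2 hy
  have := ratio_strictMono hk (mem_Ioi.2 hx) (mem_Ioi.2 hy) hxy
  rw [div_lt_div_iff₀ hsx hsy] at this
  linarith

private lemma cont1 (k : ℝ) : Continuous (fun t : ℝ => k * Real.sinh (k * t)) :=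
  continuous_const.mul (Real.continuous_sinh.comp (continuous_const.mul continuous_id))

private lemma cont2 (C : ℝ) : Continuous (fun t : ℝ => C * Real.sinh t) :=
  continuous_const.mul Real.continuous_sinh

/-- FTC for cosh(k t). -/
private lemma cosh_sub_eq_integral (k u v : ℝ) :
    Real.cosh (k * v) - Real.cosh (k * u) = ∫ t in u..v, k * Real.sinh (k * t) := by
  rw [intervalIntegral.integral_eq_sub_of_hasDerivAt (fun t _ => hasDerivAt_cosh_mul k t)]
  exact (cont1 k).intervalIntegrable u v

/-- Key strict inequality. -/
private lemma key_lemma {a b c d k : ℝ} (hk : 1 < k) (hb : 0 ≤ b) (hbd : b < d)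
    (hdc : d ≤ c) (hca : c < a)
    (h1 : Real.cosh a + Real.cosh b = Real.cosh c + Real.cosh d) :
    Real.cosh (k * c) + Real.cosh (k * d) < Real.cosh (k * a) + Real.cosh (k * b) := by
  have hd0 : 0 < d := lt_of_le_of_lt hb hbd
  have hc0 : 0 < c := lt_of_lt_of_le hd0 hdc
  have hsd : 0 < Real.sinh d := Real.sinh_pos_iff.2 hd0
  set C : ℝ := Real.sinh (k * d) / Real.sinh d with hC
  have hCpos : 0 < C := div_pos (Real.sinh_pos_iff.2 (by positivity)) hsd
  -- integral of sinh
  have hint_sinh : ∀ u v : ℝ, (∫ t in u..v, Real.sinh t) = Real.cosh v - Real.cosh u := by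
    intro u v
    exact intervalIntegral.integral_eq_sub_of_hasDerivAt (fun t _ => Real.hasDerivAt_cosh t)
      (Real.continuous_sinh.intervalIntegrable u v)
  -- first: cosh(kd) - cosh(kb) ≤ k*C*(cosh d - cosh b)
  have I1 : Real.cosh (k * d) - Real.cosh (k * b) ≤ k * C * (Real.cosh d - Real.cosh b) := by
    rw [cosh_sub_eq_integral]
    have : k * C * (Real.cosh d - Real.cosh b) = ∫ t in b..d, k * C * Real.sinh t := by
      rw [intervalIntegral.integral_const_mul, hint_sinh]
    rw [this]
    apply intervalIntegral.integral_mono_on hbd.le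
      ((cont1 k).intervalIntegrable b d) ((cont2 (k * C)).intervalIntegrable b d)
    intro t ht
    rcases eq_or_lt_of_le (hb.trans ht.1) with h0 | h0
    · simp [← h0]
    · have hcross := cross_le hk h0 ht.2
      have hst : 0 < Real.sinh t := Real.sinh_pos_iff.2 h0
      have : Real.sinh (k * t) ≤ C * Real.sinh t := by
        rw [hC, div_mul_eq_mul_div, le_div_iff₀ hsd]
        linarith
      nlinarith [this, lt_trans one_pos hk]
  -- second: k*C*(cosh a - cosh c) < cosh(ka) - cosh(kc)
  have I2 : k * C * (Real.cosh a - Real.cosh c) < Real.cosh (k * a) - Real.cosh (k * c) := by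
    rw [cosh_sub_eq_integral]
    have : k * C * (Real.cosh a - Real.cosh c) = ∫ t in c..a, k * C * Real.sinh t := by
      rw [intervalIntegral.integral_const_mul, hint_sinh]
    rw [this]
    apply intervalIntegral.integral_lt_integral_of_continuousOn_of_le_of_exists_lt hca
      (cont2 (k * C)).continuousOn (cont1 k).continuousOn
    · intro t ht
      have ht0 : 0 < t := lt_of_lt_of_le hc0 ht.1.le
      have hcross := cross_le hk hd0 (hdc.trans ht.1.le)
      have hst : 0 < Real.sinh t := Real.sinh_pos_iff.2 ht0
      have : C * Real.sinh t ≤ Real.sinh (k * t) := by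
        rw [hC, div_mul_eq_mul_div, div_le_iff₀ hsd]
        linarith
      nlinarith [this, lt_trans one_pos hk]
    · refine ⟨a, ⟨hca.le, le_refl a⟩, ?_⟩
      have hcross := cross_lt hk hd0 (lt_of_le_of_lt hdc hca)
      have hsa : 0 < Real.sinh a := Real.sinh_pos_iff.2 (lt_trans hc0 hca)
      have : C * Real.sinh a < Real.sinh (k * a) := by
        rw [hC, div_mul_eq_mul_div, div_lt_iff₀ hsd]
        linarith
      nlinarith [this, lt_trans one_pos hk]
  have hE : Real.cosh d - Real.cosh b = Real.cosh a - Real.cosh c := by linarith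
  rw [hE] at I1
  linarith

/-- Ordered version of the main result. -/
private lemma main_aux {a b c d k : ℝ} (ha : 0 ≤ a) (hb : 0 ≤ b) (hc : 0 ≤ c) (hd : 0 ≤ d)
    (hk : 1 < k) (hba : b ≤ a) (hdc : d ≤ c)
    (h1 : Real.cosh a + Real.cosh b = Real.cosh c + Real.cosh d)
    (h2 : Real.cosh (k * a) + Real.cosh (k * b) = Real.cosh (k * c) + Real.cosh (k * d)) :
    a = c ∧ b = d := by
  rcases lt_trichotomy a c with hac | hac | hac
  · -- c > a : symmetric application
    exfalso
    have hdb : d < b := by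
      by_contra h
      push_neg at h
      have h3 : Real.cosh b ≤ Real.cosh d :=
        Real.cosh_le_cosh.2 (by rw [abs_of_nonneg hb, abs_of_nonneg hd]; exact h)
      have h4 : Real.cosh a < Real.cosh c :=
        Real.cosh_lt_cosh.2 (by rw [abs_of_nonneg ha, abs_of_nonneg hc]; exact hac)
      linarith
    have := key_lemma hk hd hdb hba hac h1.symm
    linarith
  · -- a = c
    subst hac
    have hbd : Real.cosh b = Real.cosh d := by linarith
    refine ⟨rfl, le_antisymm ?_ ?_⟩
    · by_contra h
      push_neg at h
      have := (@Real.cosh_lt_cosh d b).2 (by rw [abs_of_nonneg hd, abs_of_nonneg hb]; exact h)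
      linarith
    · by_contra h
      push_neg at h
      have := (@Real.cosh_lt_cosh b d).2 (by rw [abs_of_nonneg hb, abs_of_nonneg hd]; exact h)
      linarith
  · -- a > c
    exfalso
    have hbd : b < d := by
      by_contra h
      push_neg at h
      have h3 : Real.cosh d ≤ Real.cosh b :=
        Real.cosh_le_cosh.2 (by rw [abs_of_nonneg hd, abs_of_nonneg hb]; exact h)
      have h4 : Real.cosh c < Real.cosh a :=
        Real.cosh_lt_cosh.2 (by rw [abs_of_nonneg hc, abs_of_nonneg ha]; exact hac)
      linarith
    have := key_lemma hk hb hbd hdc hac h1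
    linarith

/-- For a,b,c,d ≥ 0 and k > 1, the two equations
cosh a + cosh b = cosh c + cosh d and cosh(ka) + cosh(kb) = cosh(kc) + cosh(kd)
hold simultaneously iff {a,b} = {c,d}. -/
theorem cosh_sum_rigidity (a b c d k : ℝ)
    (ha : 0 ≤ a) (hb : 0 ≤ b) (hc : 0 ≤ c) (hd : 0 ≤ d) (hk : 1 < k) :
    (Real.cosh a + Real.cosh b = Real.cosh c + Real.cosh d ∧
      Real.cosh (k * a) + Real.cosh (k * b) = Real.cosh (k * c) + Real.cosh (k * d)) ↔
    ((a = c ∧ b = d) ∨ (a = d ∧ b = c)) := by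
  constructor
  · rintro ⟨h1, h2⟩
    rcases le_total b a with hba | hba <;> rcases le_total d c with hdc | hdc
    · exact Or.inl (main_aux ha hb hc hd hk hba hdc h1 h2)
    · have := main_aux ha hb hd hc hk hba hdc (by linarith) (by linarith)
      exact Or.inr ⟨this.1, this.2⟩
    · have := main_aux hb ha hc hd hk hba hdc (by linarith) (by linarith)
      exact Or.inr ⟨this.2, this.1⟩
    · have := main_aux hb ha hd hc hk hba hdc (by linarith) (by linarith)
      exact Or.inl ⟨this.2, this.1⟩
  · rintro (⟨rfl, rfl⟩ | ⟨rfl, rfl⟩)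
    · exact ⟨rfl, rfl⟩
    · exact ⟨by ring, by ring⟩
end

section
/- Let z, w ∈ ℂ with Im z ≥ 0 and Im w ≥ 0, and let λ > 0 be a real number. If |p + q·z| = λ·|p + q·w| for all integers p and q, then λ = 1 and z = w. -/
open Complex

/-- If z, w lie in the closed upper half-plane, λ > 0, and
|p + q·z| = λ·|p + q·w| for all integers p, q, then λ = 1 and z = w. -/
theorem torus_functionals_injective (z w : ℂ) (hz : 0 ≤ z.im) (hw : 0 ≤ w.im)
    (lam : ℝ) (hlam : 0 < lam)
    (h : ∀ p q : ℤ, ‖(p : ℂ) + (q : ℂ) * z‖ =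
      lam * ‖(p : ℂ) + (q : ℂ) * w‖) :
    lam = 1 ∧ z = w := by
  have h10 := h 1 0
  simp at h10
  have hlam1 : lam = 1 := h10.symm
  subst hlam1
  refine ⟨rfl, ?_⟩
  have h01 := h 0 1
  have h11 := h 1 1
  simp at h01 h11
  have habs : normSq z = normSq w := by
    have := congrArg (· ^ 2) h01
    simpa [Complex.sq_norm] using this
  have habs2 : normSq (1 + z) = normSq (1 + w) := by
    have := congrArg (· ^ 2) h11
    simpa [Complex.sq_norm] using this
  have hre : z.re = w.re := by
    simp only [Complex.normSq_apply, Complex.add_re, Complex.add_im,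
      Complex.one_re, Complex.one_im] at habs habs2
    nlinarith [habs, habs2]
  have him : z.im = w.im := by
    have h2 : z.im ^ 2 = w.im ^ 2 := by
      have := habs
      simp [Complex.normSq_apply, hre] at this
      nlinarith [this]
    nlinarith [h2, hz, hw]
  exact Complex.ext hre him
end

section
/- Let n ≥ 1 and let M be an n×n real matrix with non-negative entries such that no column of M is zero (for every j there is an i with M_{ij} > 0). Then there exist a vector v ∈ ℝⁿ with non-negative entries summing to 1 and a real number λ > 0 such that Mv = λv. -/
lemma pos_matrix_eigen (n : ℕ) (hn : 1 ≤ n) (M : Matrix (Fin n) (Fin n) ℝ)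
    (hpos : ∀ i j, 0 < M i j) :
    ∃ v ∈ stdSimplex ℝ (Fin n), ∃ lam : ℝ, M.mulVec v = lam • v := by
  haveI : Nonempty (Fin n) := ⟨⟨0, hn⟩⟩
  have hmv : ∀ (u : Fin n → ℝ) (i : Fin n), M.mulVec u i = ∑ j, M i j * u j := by
    intro u i; simp [Matrix.mulVec, dotProduct]
  set C : ℝ := ∑ i, ∑ j, M i j with hC
  set K : Set ((Fin n → ℝ) × ℝ) :=
    {p | p.1 ∈ stdSimplex ℝ (Fin n) ∧ p.2 ∈ Set.Icc (0:ℝ) C ∧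
      ∀ i, p.2 * p.1 i ≤ M.mulVec p.1 i} with hKdef
  -- closedness
  have hclosed : IsClosed K := by
    have h1 : IsClosed {p : (Fin n → ℝ) × ℝ | p.1 ∈ stdSimplex ℝ (Fin n)} :=
      (isClosed_stdSimplex _ _).preimage continuous_fst
    have h2 : IsClosed {p : (Fin n → ℝ) × ℝ | p.2 ∈ Set.Icc (0:ℝ) C} :=
      isClosed_Icc.preimage continuous_snd
    have h3 : IsClosed {p : (Fin n → ℝ) × ℝ | ∀ i, p.2 * p.1 i ≤ M.mulVec p.1 i} := by
      have : {p : (Fin n → ℝ) × ℝ | ∀ i, p.2 * p.1 i ≤ M.mulVec p.1 i} =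
          ⋂ i, {p : (Fin n → ℝ) × ℝ | p.2 * p.1 i ≤ M.mulVec p.1 i} := by
        ext p; simp
      rw [this]
      refine isClosed_iInter fun i => ?_
      have hc1 : Continuous fun p : (Fin n → ℝ) × ℝ => p.2 * p.1 i :=
        continuous_snd.mul ((continuous_apply i).comp continuous_fst)
      have hc2 : Continuous fun p : (Fin n → ℝ) × ℝ => M.mulVec p.1 i := by
        have : (fun p : (Fin n → ℝ) × ℝ => M.mulVec p.1 i) =
            fun p => ∑ j, M i j * p.1 j := by
          funext p; exact hmv p.1 i
        rw [this]
        exact continuous_finset_sum _ fun j _ =>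
          continuous_const.mul ((continuous_apply j).comp continuous_fst)
      exact isClosed_le hc1 hc2
    have : K = _ ∩ (_ ∩ _) := rfl
    exact h1.inter (h2.inter h3)
  have hsub : K ⊆ (stdSimplex ℝ (Fin n)) ×ˢ Set.Icc (0:ℝ) C := by
    rintro p ⟨h1, h2, _⟩; exact ⟨h1, h2⟩
  have hcpt : IsCompact K :=
    ((isCompact_stdSimplex _ _).prod isCompact_Icc).of_isClosed_subset hclosed hsub
  have hn0 : (n:ℝ) ≠ 0 := by positivity
  have hne : K.Nonempty := by
    refine ⟨(fun _ => (n:ℝ)⁻¹, 0), ⟨fun i => by positivity, ?_⟩, ?_, ?_⟩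
    · simp [Finset.sum_const, Finset.card_univ, mul_inv_cancel₀ hn0]
    · exact ⟨le_refl _,
        Finset.sum_nonneg fun i _ => Finset.sum_nonneg fun j _ => (hpos i j).le⟩
    · intro i
      rw [hmv]
      simp only [zero_mul]
      exact Finset.sum_nonneg fun j _ => mul_nonneg (hpos i j).le (by positivity)
  obtain ⟨p, hpK, hmax⟩ := hcpt.exists_isMaxOn hne continuous_snd.continuousOn
  obtain ⟨hv, hl, hineq⟩ := hpK
  set v := p.1 with hvdef
  set l := p.2 with hldef
  set w := M.mulVec v with hwdef
  -- some coordinate of v is positive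
  obtain ⟨j0, hj0⟩ : ∃ j, 0 < v j := by
    by_contra h
    push_neg at h
    have : ∑ j, v j = 0 := le_antisymm (Finset.sum_nonpos fun j _ => h j)
      (Finset.sum_nonneg fun j _ => hv.1 j)
    rw [hv.2] at this; norm_num at this
  have hwpos : ∀ i, 0 < w i := by
    intro i
    have h1 : M i j0 * v j0 ≤ ∑ j, M i j * v j :=
      Finset.single_le_sum (fun j _ => mul_nonneg (hpos i j).le (hv.1 j)) (Finset.mem_univ j0)
    have := mul_pos (hpos i j0) hj0
    rw [hwdef, hmv]
    linarith
  by_cases hz : ∀ i, w i = l * v i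
  · exact ⟨v, hv, l, funext fun i => by rw [← hwdef] at *; simp [hz i, Pi.smul_apply, smul_eq_mul]⟩
  push_neg at hz
  obtain ⟨k, hk⟩ := hz
  have hk' : l * v k < w k := lt_of_le_of_ne (hineq k) (Ne.symm hk)
  exfalso
  set s : ℝ := ∑ i, w i with hsdef
  have hs : 0 < s := Finset.sum_pos (fun i _ => hwpos i) Finset.univ_nonempty
  set y : Fin n → ℝ := fun i => w i / s with hydef
  have hypos : ∀ i, 0 < y i := fun i => div_pos (hwpos i) hs
  have hysum : ∑ i, y i = 1 := by rw [hydef]; rw [← Finset.sum_div]; exact div_self hs.ne'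
  have hyΔ : y ∈ stdSimplex ℝ (Fin n) := ⟨fun i => (hypos i).le, hysum⟩
  -- strict inequality for y
  have hstrict : ∀ i, l * y i < M.mulVec y i := by
    intro i
    have key : l * w i < M.mulVec w i := by
      have h1 : ∀ j ∈ Finset.univ, M i j * (l * v j) ≤ M i j * w j :=
        fun j _ => mul_le_mul_of_nonneg_left (hineq j) (hpos i j).le
      have h2 : M i k * (l * v k) < M i k * w k :=
        mul_lt_mul_of_pos_left hk' (hpos i k)
      have h3 : ∑ j, M i j * (l * v j) < ∑ j, M i j * w j :=
        Finset.sum_lt_sum h1 ⟨k, Finset.mem_univ k, h2⟩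
      have h4 : ∑ j, M i j * (l * v j) = l * ∑ j, M i j * v j := by
        rw [Finset.mul_sum]; congr 1; funext j; ring
      calc l * w i = l * ∑ j, M i j * v j := by rw [hwdef, hmv]
        _ = ∑ j, M i j * (l * v j) := h4.symm
        _ < ∑ j, M i j * w j := h3
        _ = M.mulVec w i := (hmv w i).symm
    have hmy : M.mulVec y i = M.mulVec w i / s := by
      rw [hmv, hmv, Finset.sum_div]
      simp only [hydef]
      exact Finset.sum_congr rfl fun j _ => (mul_div_assoc _ _ _).symm
    have hly : l * y i = l * w i / s := by rw [hydef]; ring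
    rw [hmy, hly]
    exact (div_lt_div_iff_of_pos_right hs).mpr key
  -- improve the eigen-bound, contradicting maximality
  set g : Fin n → ℝ := fun i => (M.mulVec y i - l * y i) / y i with hgdef
  have hgpos : ∀ i, 0 < g i := fun i => div_pos (by linarith [hstrict i]) (hypos i)
  set d : ℝ := Finset.univ.inf' Finset.univ_nonempty g with hddef
  have hd : 0 < d := by
    rw [hddef, Finset.lt_inf'_iff]
    exact fun i _ => hgpos i
  have hkey : ∀ i, (l + d) * y i ≤ M.mulVec y i := by
    intro i
    have h1 : d ≤ g i := Finset.inf'_le g (Finset.mem_univ i)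
    have h2 : d * y i ≤ g i * y i := mul_le_mul_of_nonneg_right h1 (hypos i).le
    have h3 : g i * y i = M.mulVec y i - l * y i := by
      rw [hgdef]; exact div_mul_cancel₀ _ (hypos i).ne'
    nlinarith
  have hyle : ∀ j, y j ≤ 1 := by
    intro j
    have := Finset.single_le_sum (f := y) (fun i _ => (hypos i).le) (Finset.mem_univ j)
    rw [hysum] at this; exact this
  have hCle : l + d ≤ C := by
    have h1 : (l + d) * ∑ i, y i ≤ ∑ i, M.mulVec y i := by
      rw [Finset.mul_sum]
      exact Finset.sum_le_sum fun i _ => hkey i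
    rw [hysum, mul_one] at h1
    have h2 : ∑ i, M.mulVec y i ≤ C := by
      rw [hC]
      refine Finset.sum_le_sum fun i _ => ?_
      rw [hmv]
      refine Finset.sum_le_sum fun j _ => ?_
      calc M i j * y j ≤ M i j * 1 := mul_le_mul_of_nonneg_left (hyle j) (hpos i j).le
        _ = M i j := mul_one _
    linarith
  have hmem : (y, l + d) ∈ K := by
    refine ⟨hyΔ, ⟨?_, ?_⟩, fun i => hkey i⟩
    · show (0:ℝ) ≤ l + d
      linarith [hl.1, hd.le]
    · show l + d ≤ C
      exact hCle
  have h5 : l + d ≤ l := hmax hmem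
  linarith

/-- A non-negative real square matrix with no zero column has a non-negative eigenvector
(lying in the standard simplex) with a positive eigenvalue. -/
theorem nonneg_matrix_has_nonneg_eigenvector (n : ℕ) (hn : 1 ≤ n)
    (M : Matrix (Fin n) (Fin n) ℝ) (hM : ∀ i j, 0 ≤ M i j)
    (hcol : ∀ j, ∃ i, 0 < M i j) :
    ∃ (v : Fin n → ℝ) (lam : ℝ), (∀ i, 0 ≤ v i) ∧ (∑ i, v i) = 1 ∧ 0 < lam ∧
      M.mulVec v = lam • v := by
  haveI : Nonempty (Fin n) := ⟨⟨0, hn⟩⟩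
  have hmv : ∀ (A : Matrix (Fin n) (Fin n) ℝ) (u : Fin n → ℝ) (i : Fin n),
      A.mulVec u i = ∑ j, A i j * u j := by
    intro A u i; simp [Matrix.mulVec, dotProduct]
  -- column sums and their minimum
  set c : Fin n → ℝ := fun j => ∑ i, M i j with hc
  have hcpos : ∀ j, 0 < c j := by
    intro j
    obtain ⟨i, hi⟩ := hcol j
    exact Finset.sum_pos' (fun i' _ => hM i' j) ⟨i, Finset.mem_univ i, hi⟩
  set δ : ℝ := Finset.univ.inf' Finset.univ_nonempty c with hδdef
  have hδ : 0 < δ := by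
    rw [hδdef, Finset.lt_inf'_iff]; exact fun j _ => hcpos j
  set C' : ℝ := ∑ i, ∑ j, (M i j + 1) with hC'
  -- perturbed matrices
  set Mk : ℕ → Matrix (Fin n) (Fin n) ℝ :=
    fun k => Matrix.of fun i j => M i j + ((k:ℝ)+1)⁻¹ with hMk
  have hεpos : ∀ k : ℕ, (0:ℝ) < ((k:ℝ)+1)⁻¹ := fun k => by positivity
  have hεle : ∀ k : ℕ, ((k:ℝ)+1)⁻¹ ≤ 1 := by
    intro k
    rw [inv_le_one_iff₀]
    right; linarith [Nat.cast_nonneg (α := ℝ) k]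
  have hMkpos : ∀ k i j, 0 < Mk k i j := by
    intro k i j
    show 0 < M i j + ((k:ℝ)+1)⁻¹
    linarith [hM i j, hεpos k]
  choose vk hvkΔ lamk heig using fun k => pos_matrix_eigen n hn (Mk k) (hMkpos k)
  have hvknn : ∀ k j, 0 ≤ vk k j := fun k j => (hvkΔ k).1 j
  have hvksum : ∀ k, ∑ j, vk k j = 1 := fun k => (hvkΔ k).2
  have hvkle1 : ∀ k j, vk k j ≤ 1 := by
    intro k j
    have := Finset.single_le_sum (f := vk k) (fun i _ => hvknn k i) (Finset.mem_univ j)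
    rw [hvksum k] at this; exact this
  -- lamk = double sum
  have hlam_eq : ∀ k, lamk k = ∑ i, ∑ j, Mk k i j * vk k j := by
    intro k
    have h := congrArg (fun u : Fin n → ℝ => ∑ i, u i) (heig k)
    simp only [Pi.smul_apply, smul_eq_mul] at h
    rw [← Finset.mul_sum, hvksum k, mul_one] at h
    rw [← h]
    exact Finset.sum_congr rfl fun i _ => hmv _ _ i
  have hlam_lb : ∀ k, δ ≤ lamk k := by
    intro k
    rw [hlam_eq k, Finset.sum_comm]
    have h1 : ∀ j, δ * vk k j ≤ ∑ i, Mk k i j * vk k j := by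
      intro j
      have h2 : δ * vk k j ≤ c j * vk k j :=
        mul_le_mul_of_nonneg_right (Finset.inf'_le c (Finset.mem_univ j)) (hvknn k j)
      have hcj : c j = ∑ i, M i j := rfl
      have h3 : c j * vk k j ≤ ∑ i, Mk k i j * vk k j := by
        rw [hcj, Finset.sum_mul]
        refine Finset.sum_le_sum fun i _ => ?_
        refine mul_le_mul_of_nonneg_right ?_ (hvknn k j)
        show M i j ≤ M i j + ((k:ℝ)+1)⁻¹
        linarith [hεpos k]
      linarith
    calc δ = δ * ∑ j, vk k j := by rw [hvksum k, mul_one]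
      _ = ∑ j, δ * vk k j := Finset.mul_sum _ _ _
      _ ≤ ∑ j, ∑ i, Mk k i j * vk k j := Finset.sum_le_sum fun j _ => h1 j
  have hlam_ub : ∀ k, lamk k ≤ C' := by
    intro k
    rw [hlam_eq k, hC']
    refine Finset.sum_le_sum fun i _ => Finset.sum_le_sum fun j _ => ?_
    have h1 : Mk k i j ≤ M i j + 1 := by
      show M i j + ((k:ℝ)+1)⁻¹ ≤ M i j + 1
      linarith [hεle k]
    calc Mk k i j * vk k j ≤ (M i j + 1) * vk k j :=
          mul_le_mul_of_nonneg_right h1 (hvknn k j)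
      _ ≤ (M i j + 1) * 1 :=
          mul_le_mul_of_nonneg_left (hvkle1 k j) (by linarith [hM i j])
      _ = M i j + 1 := mul_one _
  -- compactness
  have hScpt : IsCompact ((stdSimplex ℝ (Fin n)) ×ˢ Set.Icc δ C') :=
    (isCompact_stdSimplex _ _).prod isCompact_Icc
  have hmem : ∀ k, (vk k, lamk k) ∈ (stdSimplex ℝ (Fin n)) ×ˢ Set.Icc δ C' :=
    fun k => ⟨hvkΔ k, hlam_lb k, hlam_ub k⟩
  obtain ⟨a, haS, φ, hφ, hlim⟩ := hScpt.tendsto_subseq hmem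
  have hvlim : Filter.Tendsto (fun m => vk (φ m)) Filter.atTop (nhds a.1) :=
    (continuous_fst.tendsto a).comp hlim
  have hvi : ∀ i, Filter.Tendsto (fun m => vk (φ m) i) Filter.atTop (nhds (a.1 i)) :=
    fun i => ((continuous_apply i).tendsto _).comp hvlim
  have hlamlim : Filter.Tendsto (fun m => lamk (φ m)) Filter.atTop (nhds a.2) :=
    (continuous_snd.tendsto a).comp hlim
  have hεlim : Filter.Tendsto (fun m => ((φ m : ℝ)+1)⁻¹) Filter.atTop (nhds 0) := by
    have h1 : Filter.Tendsto (fun m => ((φ m : ℝ)+1)) Filter.atTop Filter.atTop :=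
      Filter.tendsto_atTop_add_const_right _ 1
        (tendsto_natCast_atTop_atTop.comp hφ.tendsto_atTop)
    exact tendsto_inv_atTop_zero.comp h1
  -- pass to the limit coordinatewise
  have hfinal : ∀ i, M.mulVec a.1 i = a.2 * a.1 i := by
    intro i
    have hL : Filter.Tendsto (fun m => (Mk (φ m)).mulVec (vk (φ m)) i)
        Filter.atTop (nhds (M.mulVec a.1 i)) := by
      have h1 : ∀ m, (Mk (φ m)).mulVec (vk (φ m)) i
          = ∑ j, (M i j + ((φ m : ℝ)+1)⁻¹) * vk (φ m) j := by
        intro m; exact hmv _ _ i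
      simp only [h1, hmv M a.1 i]
      refine tendsto_finset_sum _ fun j _ => ?_
      have h2 : Filter.Tendsto (fun m => (M i j + ((φ m : ℝ)+1)⁻¹))
          Filter.atTop (nhds (M i j)) := by
        have := Filter.Tendsto.add (tendsto_const_nhds (x := M i j)) hεlim
        simpa using this
      have := h2.mul (hvi j)
      exact this
    have hR : Filter.Tendsto (fun m => lamk (φ m) * vk (φ m) i)
        Filter.atTop (nhds (a.2 * a.1 i)) := hlamlim.mul (hvi i)
    have heq : (fun m => (Mk (φ m)).mulVec (vk (φ m)) i)
        = fun m => lamk (φ m) * vk (φ m) i := by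
      funext m
      rw [heig (φ m)]
      simp
    rw [heq] at hL
    exact tendsto_nhds_unique hL hR
  exact ⟨a.1, a.2, haS.1.1, haS.1.2, lt_of_lt_of_le hδ haS.2.1,
    funext fun i => by rw [hfinal i]; simp⟩
end

section
/- Let U = {(t,θ) ∈ ℝ × (0,π) : (1 + e^t·cot θ)² < e^{2t}/sin²θ}. For (t,θ) ∈ U set R = e^t/sin θ and C = −e^t·cot θ, and define t' = (1/2)·log(R² − (C−1)²) and θ' = arccos((1−C)/R) ∈ (0,π). Then the map Φ : U → ℝ × (0,π), Φ(t,θ) = (t',θ'), is differentiable and the determinant of its derivative at (t,θ) equals sin θ / sin θ'. -/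
open Real

private lemma det_aux (L : (ℝ×ℝ) →ₗ[ℝ] (ℝ×ℝ)) :
    LinearMap.det L = (L (1,0)).1 * (L (0,1)).2 - (L (0,1)).1 * (L (1,0)).2 := by
  rw [← LinearMap.det_toMatrix (Module.Basis.finTwoProd ℝ), Matrix.det_fin_two]
  simp [LinearMap.toMatrix_apply, Module.Basis.finTwoProd]

set_option maxHeartbeats 1600000 in
/-- Change of charts for the Liouville measure: with R = e^t/sin θ, C = −e^t·cot θ,
t' = (1/2)·log(R² − (C−1)²), θ' = arccos((1−C)/R), the map Φ(t,θ) = (t',θ') is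
differentiable on U = {(t,θ) : θ ∈ (0,π), (1 + e^t·cot θ)² < e^{2t}/sin²θ} and the
determinant of its derivative is sin θ / sin θ', with θ' ∈ (0,π). -/
theorem jacobian_chart_change (t θ : ℝ) (hθ : θ ∈ Set.Ioo 0 π)
    (hU : (1 + Real.exp t * (Real.cos θ / Real.sin θ)) ^ 2
        < Real.exp (2 * t) / (Real.sin θ) ^ 2) :
    let Φ : ℝ × ℝ → ℝ × ℝ := fun p =>
      ((1 / 2) * Real.log ((Real.exp p.1 / Real.sin p.2) ^ 2
          - ((-(Real.exp p.1 * (Real.cos p.2 / Real.sin p.2))) - 1) ^ 2),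
        Real.arccos ((1 - (-(Real.exp p.1 * (Real.cos p.2 / Real.sin p.2))))
          / (Real.exp p.1 / Real.sin p.2)))
    (Φ (t, θ)).2 ∈ Set.Ioo 0 π ∧
    DifferentiableAt ℝ Φ (t, θ) ∧
    LinearMap.det
      ((fderiv ℝ Φ (t, θ) : (ℝ × ℝ) →L[ℝ] (ℝ × ℝ)) : (ℝ × ℝ) →ₗ[ℝ] (ℝ × ℝ)) =
      Real.sin θ / Real.sin (Φ (t, θ)).2 := by
  intro Φ
  obtain ⟨hθ0, hθπ⟩ := hθ
  set s := Real.sin θ with hs_def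
  set c := Real.cos θ with hc_def
  set E := Real.exp t with hE_def
  have hs : 0 < s := Real.sin_pos_of_pos_of_lt_pi hθ0 hθπ
  have hE : 0 < E := Real.exp_pos t
  have hsc : s ^ 2 + c ^ 2 = 1 := Real.sin_sq_add_cos_sq θ
  have hE2 : Real.exp (2 * t) = E ^ 2 := by
    rw [two_mul, Real.exp_add]; ring
  -- key inequality
  have key : (s + E * c) ^ 2 < E ^ 2 := by
    rw [hE2] at hU
    have h := mul_lt_mul_of_pos_right hU (pow_pos hs 2)
    have e1 : (1 + E * (c / s)) ^ 2 * s ^ 2 = (s + E * c) ^ 2 := by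
      field_simp
    have e2 : E ^ 2 / s ^ 2 * s ^ 2 = E ^ 2 := by
      field_simp
    rw [e1, e2] at h
    exact h
  -- positive denominator for the log
  set G : ℝ := Real.exp (2 * t) - 2 * (Real.exp t * (c / s)) - 1 with hG_def
  have hGdef2 : G = E ^ 2 - 2 * (E * (c / s)) - 1 := by rw [hG_def, hE2, hE_def]
  have h2cs : 2 * (E * (c / s)) * s = 2 * E * c := by field_simp
  have h3cs : (c / s) * s ^ 2 = c * s := by field_simp
  have hGs : G * s ^ 2 = E ^ 2 - (s + E * c) ^ 2 := by
    linear_combination s ^ 2 * hGdef2 - 2 * E * h3cs + E ^ 2 * hsc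
  have hG : 0 < G := by
    have h3 : 0 < G * s ^ 2 := by rw [hGs]; linarith
    by_contra h
    push_neg at h
    nlinarith [mul_nonneg (neg_nonneg.mpr h) (sq_nonneg s)]
  -- U and its bounds
  set U : ℝ := c + s * Real.exp (-t) with hU_def
  have hexpneg : Real.exp (-t) = E⁻¹ := Real.exp_neg t
  have hU1 : U < 1 := by
    have h1 : s + E * c < E := by nlinarith [key, hE]
    rw [hU_def, hexpneg,
      show c + s * E⁻¹ = (s + E * c) / E by field_simp; ring, div_lt_one hE]
    exact h1
  have hU2 : -1 < U := by
    have h1 : -E < s + E * c := by nlinarith [key, hE]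
    rw [hU_def, hexpneg,
      show c + s * E⁻¹ = (s + E * c) / E by field_simp; ring, lt_div_iff₀ hE]
    linarith
  have hUsq : U ^ 2 < 1 := by nlinarith
  set q : ℝ := Real.sqrt (1 - U ^ 2) with hq_def
  have hq : 0 < q := Real.sqrt_pos.mpr (by linarith)
  have hq2 : q ^ 2 = 1 - U ^ 2 := Real.sq_sqrt (by linarith)
  -- Φ(t,θ).2 = arccos U
  have harg : (1 - (-(Real.exp t * (c / s)))) / (Real.exp t / s) = U := by
    rw [hU_def, hexpneg]
    field_simp
    ring
  have hΦ2 : (Φ (t, θ)).2 = Real.arccos U := by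
    simp only [Φ]
    rw [harg]
  have hmem : (Φ (t, θ)).2 ∈ Set.Ioo 0 π := by
    rw [hΦ2]
    constructor
    · exact Real.arccos_pos.mpr hU1
    · exact lt_of_le_of_ne (Real.arccos_le_pi U)
        (fun h => absurd (Real.arccos_eq_pi.mp h) (by linarith))
  have hsin' : Real.sin (Φ (t, θ)).2 = q := by
    rw [hΦ2, Real.sin_arccos, hq_def]
  -- the simplified map Ψ
  set Ψ : ℝ × ℝ → ℝ × ℝ := fun p =>
    ((1 / 2) * Real.log (Real.exp (2 * p.1) - 2 * (Real.exp p.1 * (Real.cos p.2 / Real.sin p.2)) - 1),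
      Real.arccos (Real.cos p.2 + Real.sin p.2 * Real.exp (-p.1))) with hΨ_def
  -- Φ = Ψ near (t,θ)
  have hopen : IsOpen {p : ℝ × ℝ | 0 < Real.sin p.2} :=
    isOpen_lt continuous_const (Real.continuous_sin.comp continuous_snd)
  have hmem' : (t, θ) ∈ {p : ℝ × ℝ | 0 < Real.sin p.2} := hs
  have heq : Φ =ᶠ[nhds (t, θ)] Ψ := by
    filter_upwards [hopen.mem_nhds hmem'] with p hp
    have hps : Real.sin p.2 ≠ 0 := ne_of_gt hp
    have hpE : Real.exp p.1 ≠ 0 := (Real.exp_pos p.1).ne'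
    have hpsc : Real.sin p.2 ^ 2 + Real.cos p.2 ^ 2 = 1 := Real.sin_sq_add_cos_sq p.2
    have h1 : (Real.exp p.1 / Real.sin p.2) ^ 2
        - ((-(Real.exp p.1 * (Real.cos p.2 / Real.sin p.2))) - 1) ^ 2
        = Real.exp (2 * p.1) - 2 * (Real.exp p.1 * (Real.cos p.2 / Real.sin p.2)) - 1 := by
      rw [show (2 : ℝ) * p.1 = p.1 + p.1 by ring, Real.exp_add]
      field_simp
      linear_combination (-(Real.exp p.1 ^ 2)) * hpsc
    have h2 : (1 - (-(Real.exp p.1 * (Real.cos p.2 / Real.sin p.2))))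
        / (Real.exp p.1 / Real.sin p.2)
        = Real.cos p.2 + Real.sin p.2 * Real.exp (-p.1) := by
      rw [Real.exp_neg]
      field_simp
      ring
    simp only [Φ, Ψ, hΨ_def, h1, h2]
  -- derivative of the first component of Ψ
  set fst : (ℝ × ℝ) →L[ℝ] ℝ := ContinuousLinearMap.fst ℝ ℝ ℝ with hfst_def
  set snd : (ℝ × ℝ) →L[ℝ] ℝ := ContinuousLinearMap.snd ℝ ℝ ℝ with hsnd_def
  have hcot : HasDerivAt (fun x : ℝ => Real.cos x / Real.sin x) (-(1 / s ^ 2)) θ := by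
    have h := (Real.hasDerivAt_cos θ).div (Real.hasDerivAt_sin θ) hs.ne'
    refine h.congr_deriv ?_
    rw [← hs_def, ← hc_def]
    field_simp
    nlinarith [hsc]
  have hcotF : HasFDerivAt (fun p : ℝ × ℝ => Real.cos p.2 / Real.sin p.2)
      ((-(1 / s ^ 2)) • snd) (t, θ) :=
    (hcot.comp_hasFDerivAt (t, θ) (hasFDerivAt_snd (𝕜 := ℝ)) :)
  have hexpF : HasFDerivAt (fun p : ℝ × ℝ => Real.exp p.1) (E • fst) (t, θ) :=
    ((Real.hasDerivAt_exp t).comp_hasFDerivAt (t, θ) (hasFDerivAt_fst (𝕜 := ℝ)) :)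
  have hexp2 : HasDerivAt (fun x : ℝ => Real.exp (2 * x)) (E ^ 2 * 2) t := by
    have h := (Real.hasDerivAt_exp (2 * t)).comp t
      (by simpa using (hasDerivAt_id t).const_mul (2 : ℝ))
    simpa [hE2, Function.comp_def] using h
  have hexp2F : HasFDerivAt (fun p : ℝ × ℝ => Real.exp (2 * p.1)) ((E ^ 2 * 2) • fst) (t, θ) :=
    (hexp2.comp_hasFDerivAt (t, θ) (hasFDerivAt_fst (𝕜 := ℝ)) :)
  have hprodF : HasFDerivAt (fun p : ℝ × ℝ => Real.exp p.1 * (Real.cos p.2 / Real.sin p.2))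
      (E • ((-(1 / s ^ 2)) • snd) + (c / s) • (E • fst)) (t, θ) :=
    hexpF.mul hcotF
  have hgF : HasFDerivAt (fun p : ℝ × ℝ =>
        Real.exp (2 * p.1) - 2 * (Real.exp p.1 * (Real.cos p.2 / Real.sin p.2)) - 1)
      ((E ^ 2 * 2) • fst - (2 : ℝ) • (E • ((-(1 / s ^ 2)) • snd) + (c / s) • (E • fst))) (t, θ) :=
    (hexp2F.sub (hprodF.const_mul 2)).sub_const 1
  have hlogF : HasFDerivAt (fun p : ℝ × ℝ => Real.log
        (Real.exp (2 * p.1) - 2 * (Real.exp p.1 * (Real.cos p.2 / Real.sin p.2)) - 1))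
      (G⁻¹ • ((E ^ 2 * 2) • fst - (2 : ℝ) • (E • ((-(1 / s ^ 2)) • snd) + (c / s) • (E • fst))))
      (t, θ) :=
    ((Real.hasDerivAt_log hG.ne').comp_hasFDerivAt (t, θ) hgF :)
  set D1 : (ℝ × ℝ) →L[ℝ] ℝ := ((1 : ℝ) / 2) •
      (G⁻¹ • ((E ^ 2 * 2) • fst - (2 : ℝ) • (E • ((-(1 / s ^ 2)) • snd) + (c / s) • (E • fst))))
    with hD1_def
  have hf1 : HasFDerivAt (fun p : ℝ × ℝ => (1 / 2) * Real.log
        (Real.exp (2 * p.1) - 2 * (Real.exp p.1 * (Real.cos p.2 / Real.sin p.2)) - 1))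
      D1 (t, θ) := hlogF.const_mul (1 / 2)
  -- derivative of the second component of Ψ
  have hexpnegD : HasDerivAt (fun x : ℝ => Real.exp (-x)) (Real.exp (-t) * (-1)) t :=
    (Real.hasDerivAt_exp (-t)).comp t ((hasDerivAt_id t).neg)
  have hexpnegF : HasFDerivAt (fun p : ℝ × ℝ => Real.exp (-p.1))
      ((Real.exp (-t) * (-1)) • fst) (t, θ) :=
    (hexpnegD.comp_hasFDerivAt (t, θ) (hasFDerivAt_fst (𝕜 := ℝ)) :)
  have hsinF : HasFDerivAt (fun p : ℝ × ℝ => Real.sin p.2) (c • snd) (t, θ) :=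
    ((Real.hasDerivAt_sin θ).comp_hasFDerivAt (t, θ) (hasFDerivAt_snd (𝕜 := ℝ)) :)
  have hcosF : HasFDerivAt (fun p : ℝ × ℝ => Real.cos p.2) ((-s) • snd) (t, θ) :=
    ((Real.hasDerivAt_cos θ).comp_hasFDerivAt (t, θ) (hasFDerivAt_snd (𝕜 := ℝ)) :)
  have huF : HasFDerivAt (fun p : ℝ × ℝ => Real.cos p.2 + Real.sin p.2 * Real.exp (-p.1))
      ((-s) • snd + (s • ((Real.exp (-t) * (-1)) • fst) + Real.exp (-t) • (c • snd))) (t, θ) :=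
    hcosF.add (hsinF.mul hexpnegF)
  set D2 : (ℝ × ℝ) →L[ℝ] ℝ := (-(1 / q)) •
      ((-s) • snd + (s • ((Real.exp (-t) * (-1)) • fst) + Real.exp (-t) • (c • snd)))
    with hD2_def
  have hf2 : HasFDerivAt (fun p : ℝ × ℝ =>
      Real.arccos (Real.cos p.2 + Real.sin p.2 * Real.exp (-p.1))) D2 (t, θ) := by
    have harc : HasDerivAt Real.arccos (-(1 / Real.sqrt (1 - U ^ 2))) U :=
      Real.hasDerivAt_arccos (by linarith) (by linarith)
    have := harc.comp_hasFDerivAt (t, θ) huF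
    simpa [hD2_def, hq_def, Function.comp_def] using this
  have hΨF : HasFDerivAt Ψ (D1.prod D2) (t, θ) := hf1.prodMk hf2
  -- conclude
  have hdiffΨ : DifferentiableAt ℝ Ψ (t, θ) := hΨF.differentiableAt
  have hdiffΦ : DifferentiableAt ℝ Φ (t, θ) := by
    exact hdiffΨ.congr_of_eventuallyEq heq
  refine ⟨hmem, hdiffΦ, ?_⟩
  have hfd : fderiv ℝ Φ (t, θ) = D1.prod D2 := by
    rw [heq.fderiv_eq, hΨF.fderiv]
  rw [hfd, hsin', det_aux]
  have h10 : ((D1.prod D2) (1, 0) : ℝ × ℝ) = (D1 (1, 0), D2 (1, 0)) := rfl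
  have h01 : ((D1.prod D2) (0, 1) : ℝ × ℝ) = (D1 (0, 1), D2 (0, 1)) := rfl
  have hD1a : D1 (1, 0) = (1 / 2) * (G⁻¹ * (E ^ 2 * 2 - 2 * (c / s * E))) := by
    simp [hD1_def, hfst_def, hsnd_def]
  have hD1b : D1 (0, 1) = (1 / 2) * (G⁻¹ * (-(2 * (E * (-(1 / s ^ 2)))))) := by
    simp [hD1_def, hfst_def, hsnd_def]
  have hD2a : D2 (1, 0) = (-(1 / q)) * (s * (Real.exp (-t) * (-1))) := by
    simp [hD2_def, hfst_def, hsnd_def]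
  have hD2b : D2 (0, 1) = (-(1 / q)) * (-s + Real.exp (-t) * c) := by
    simp [hD2_def, hfst_def, hsnd_def]
    ring
  simp only [ContinuousLinearMap.coe_coe, h10, h01, hD1a, hD1b, hD2a, hD2b]
  rw [hexpneg]
  field_simp
  linear_combination (-1 : ℝ) * hGs
    + (E ^ 2 + 1) * hsc
end

section
/- Let A ∈ SL(2,ℤ) with tr A = 2 and A ≠ 1. Then there exist B ∈ SL(2,ℤ) and a non-zero integer n such that B·A·B⁻¹ is the matrix with rows (1, n) and (0, 1). -/
/-- An element of SL(2,ℤ) with trace 2 which is not the identity is conjugate in SL(2,ℤ)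
to the shear matrix !![1, n; 0, 1] for some non-zero integer n. -/
theorem parabolic_sl2z_conjugate_shear (A : Matrix.SpecialLinearGroup (Fin 2) ℤ)
    (htr : Matrix.trace (A : Matrix (Fin 2) (Fin 2) ℤ) = 2) (hA : A ≠ 1) :
    ∃ (B : Matrix.SpecialLinearGroup (Fin 2) ℤ) (n : ℤ), n ≠ 0 ∧
      ((B * A * B⁻¹ : Matrix.SpecialLinearGroup (Fin 2) ℤ) : Matrix (Fin 2) (Fin 2) ℤ)
        = !![1, n; 0, 1] := by
  set a := (A : Matrix (Fin 2) (Fin 2) ℤ) 0 0 with ha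
  set b := (A : Matrix (Fin 2) (Fin 2) ℤ) 0 1 with hb
  set c := (A : Matrix (Fin 2) (Fin 2) ℤ) 1 0 with hc
  set d := (A : Matrix (Fin 2) (Fin 2) ℤ) 1 1 with hd
  have hdet : a * d - b * c = 1 := by
    have := A.prop
    rwa [Matrix.det_fin_two] at this
  have htr2 : a + d = 2 := by rwa [Matrix.trace_fin_two] at htr
  by_cases hc0 : c = 0
  · -- then a = d = 1
    have had : a * d = 1 := by rw [hc0] at hdet; linarith
    have hsq : (a - 1) ^ 2 = 0 := by linear_combination a * htr2 - had
    have ha1 : a = 1 := by have := sq_eq_zero_iff.mp hsq; linarith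
    have hd1 : d = 1 := by linarith
    have hb0 : b ≠ 0 := by
      intro h
      apply hA
      ext i j
      fin_cases i <;> fin_cases j <;>
        simp [← ha, ← hb, ← hc, ← hd, ha1, hd1, h, hc0]
    refine ⟨1, b, hb0, ?_⟩
    simp only [inv_one, mul_one, one_mul]
    ext i j
    fin_cases i <;> fin_cases j <;> simp [← ha, ← hb, ← hc, ← hd, ha1, hd1, hc0]
  · set t : ℤ := a - 1 with ht
    set G : ℤ := (Int.gcd t c : ℤ) with hG
    have hGpos : 0 < Int.gcd t c := Int.gcd_pos_of_ne_zero_right t hc0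
    have hGne : G ≠ 0 := by positivity
    set t' : ℤ := t / G with ht'
    set c' : ℤ := c / G with hc'
    have htG : t = G * t' := (Int.mul_ediv_cancel' (Int.gcd_dvd_left t c)).symm
    have hcG : c = G * c' := (Int.mul_ediv_cancel' (Int.gcd_dvd_right t c)).symm
    have hc'0 : c' ≠ 0 := fun h => hc0 (by rw [hcG, h, mul_zero])
    have hcop : IsCoprime t' c' := by
      rw [Int.isCoprime_iff_gcd_eq_one]
      exact Int.gcd_div_gcd_div_gcd hGpos
    have htG2 : a - 1 = G * t' := by rw [← ht]; exact htG
    have hbc : b * c = -(a - 1) ^ 2 := by linear_combination a * htr2 - hdet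
    have hbc' : b * c' = -(G * t' ^ 2) := by
      have h2 : G * (b * c') = G * (-(G * t' ^ 2)) := by
        linear_combination hbc - b * hcG - ((a - 1) + G * t') * htG2
      exact mul_left_cancel₀ hGne h2
    have hdvd : c' ∣ G := by
      have h1 : c' ∣ G * t' ^ 2 := ⟨-b, by linarith⟩
      exact (hcop.symm.pow_right).dvd_of_dvd_mul_right h1
    obtain ⟨s, hs⟩ := hdvd
    have hs0 : s ≠ 0 := by
      intro h; rw [h, mul_zero] at hs; exact hGne hs
    have hbval : b = -(s * t' ^ 2) := by
      have h2 : c' * b = c' * (-(s * t' ^ 2)) := by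
        linear_combination hbc' - t' ^ 2 * hs
      exact mul_left_cancel₀ hc'0 h2
    obtain ⟨x, y, hxy⟩ := hcop
    -- hxy : x * t' + y * c' = 1
    have he00 : a = 1 + c' * s * t' := by linear_combination -ht + htG + t' * hs
    have he10 : c = s * c' ^ 2 := by linear_combination hcG + c' * hs
    have he11 : d = 1 - c' * s * t' := by linear_combination htr2 - he00
    have hBdet : (!![x, y; -c', t'] : Matrix (Fin 2) (Fin 2) ℤ).det = 1 := by
      rw [Matrix.det_fin_two_of]; linear_combination hxy
    set B : Matrix.SpecialLinearGroup (Fin 2) ℤ := ⟨!![x, y; -c', t'], hBdet⟩ with hBdef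
    refine ⟨B, -s, neg_ne_zero.mpr hs0, ?_⟩
    have hAmat : (A : Matrix (Fin 2) (Fin 2) ℤ) =
        !![1 + c' * s * t', -(s * t' ^ 2); s * c' ^ 2, 1 - c' * s * t'] := by
      ext i j
      fin_cases i <;> fin_cases j
      · simpa using he00
      · simpa using hbval
      · simpa using he10
      · simpa using he11
    have hBinv : ((B⁻¹ : Matrix.SpecialLinearGroup (Fin 2) ℤ) : Matrix (Fin 2) (Fin 2) ℤ)
        = !![t', -y; c', x] := by
      rw [Matrix.SpecialLinearGroup.coe_inv]
      simp [hBdef, Matrix.adjugate_fin_two_of]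
    rw [Matrix.SpecialLinearGroup.coe_mul, Matrix.SpecialLinearGroup.coe_mul, hBinv, hAmat,
      hBdef]
    ext i j
    fin_cases i <;> fin_cases j <;>
      simp [Matrix.mul_apply, Fin.sum_univ_two]
    · linear_combination hxy
    · linear_combination (-s * (x * t' + y * c' + 1)) * hxy
    · ring
    · linear_combination hxy
end
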